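/- Let A be a smooth real vector bundle of finite rank over a smooth manifold M and let B be a smooth real vector bundle of finite rank over a smooth manifold N. Let f : M → N be a smooth map and let Φ be a morphism of vector bundles from A to B over f, i.e. a smooth map between the total spaces satisfying π_B ∘ Φ = f ∘ π_A whose restriction to each fiber A_m is an ℝ-linear map A_m → B_{f(m)}. Then Φ is a surjective submersion (i.e. Φ is surjective and its differential mfderiv at every point of the total space of A is surjective) if and only if f is a surjective submersion and for every m ∈ M the restriction Φ|_{A_m} : A_m → B_{f(m)} is a surjective linear map. -/

import Mathlib

open Bundle Function
open scoped Manifold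

set_option maxHeartbeats 1000000 in
/-- A vector bundle morphism `Φ` from `A → M` to `B → N` over a smooth map
`f : M → N` (given fiberwise by the linear maps `φ m : A m →ₗ[ℝ] B (f m)`) is a surjective
submersion if and only if `f` is a surjective submersion and every fiberwise map `φ m` is
surjective. -/
theorem vectorBundleMorphism_surjectiveSubmersion_iff
    -- the base manifold `M`
    {EM : Type*} [NormedAddCommGroup EM] [NormedSpace ℝ EM] [FiniteDimensional ℝ EM]
    {HM : Type*} [TopologicalSpace HM] (IM : ModelWithCorners ℝ EM HM) [IM.Boundaryless]
    {M : Type*} [TopologicalSpace M] [ChartedSpace HM M] [IsManifold IM (⊤ : ℕ∞) M]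
    -- the base manifold `N`
    {EN : Type*} [NormedAddCommGroup EN] [NormedSpace ℝ EN] [FiniteDimensional ℝ EN]
    {HN : Type*} [TopologicalSpace HN] (JN : ModelWithCorners ℝ EN HN) [JN.Boundaryless]
    {N : Type*} [TopologicalSpace N] [ChartedSpace HN N] [IsManifold JN (⊤ : ℕ∞) N]
    -- the smooth vector bundle `A` over `M`
    (FA : Type*) [NormedAddCommGroup FA] [NormedSpace ℝ FA] [FiniteDimensional ℝ FA]
    (A : M → Type*) [∀ x, AddCommGroup (A x)] [∀ x, Module ℝ (A x)]
    [∀ x, TopologicalSpace (A x)]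
    [TopologicalSpace (TotalSpace FA A)] [FiberBundle FA A] [VectorBundle ℝ FA A]
    [ContMDiffVectorBundle (⊤ : ℕ∞) FA A IM]
    -- the smooth vector bundle `B` over `N`
    (FB : Type*) [NormedAddCommGroup FB] [NormedSpace ℝ FB] [FiniteDimensional ℝ FB]
    (B : N → Type*) [∀ x, AddCommGroup (B x)] [∀ x, Module ℝ (B x)]
    [∀ x, TopologicalSpace (B x)]
    [TopologicalSpace (TotalSpace FB B)] [FiberBundle FB B] [VectorBundle ℝ FB B]
    [ContMDiffVectorBundle (⊤ : ℕ∞) FB B JN]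
    -- the smooth map `f : M → N`
    (f : M → N) (hf : ContMDiff IM JN (⊤ : ℕ∞) f)
    -- the morphism `Φ` of vector bundles over `f`, fiberwise given by `φ`
    (φ : ∀ m, A m →ₗ[ℝ] B (f m))
    (Φ : TotalSpace FA A → TotalSpace FB B)
    (hΦdef : ∀ a : TotalSpace FA A, Φ a = ⟨f a.proj, φ a.proj a.2⟩)
    (hΦ : ContMDiff (IM.prod 𝓘(ℝ, FA)) (JN.prod 𝓘(ℝ, FB)) (⊤ : ℕ∞) Φ) :
    (Surjective Φ ∧ ∀ a : TotalSpace FA A,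
        Surjective (mfderiv (IM.prod 𝓘(ℝ, FA)) (JN.prod 𝓘(ℝ, FB)) Φ a)) ↔
      ((Surjective f ∧ ∀ m : M, Surjective (mfderiv IM JN f m)) ∧
        ∀ m : M, Surjective (φ m)) := by
  classical
  -- the fiberwise chart representative of `φ`
  set ℓ : ∀ m : M, FA →ₗ[ℝ] FB := fun m =>
    ((trivializationAt FB B (f m)).linearMapAt ℝ (f m)).comp
      ((φ m).comp ((trivializationAt FA A m).symmₗ ℝ m)) with hℓ
  have hmA : ∀ m : M, m ∈ (trivializationAt FA A m).baseSet := fun m =>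
    mem_baseSet_trivializationAt FA A m
  have hmB : ∀ m : M, f m ∈ (trivializationAt FB B (f m)).baseSet := fun m =>
    mem_baseSet_trivializationAt FB B (f m)
  -- transfer of surjectivity between `φ m` and its chart representative `ℓ m`
  have hL_of_φ : ∀ m : M, Surjective (φ m) → Surjective (ℓ m) := by
    intro m h w
    obtain ⟨v', hv'⟩ := h ((trivializationAt FB B (f m)).symmₗ ℝ (f m) w)
    refine ⟨(trivializationAt FA A m).linearMapAt ℝ m v', ?_⟩
    simp only [hℓ, LinearMap.comp_apply]
    rw [Trivialization.symmₗ_linearMapAt _ (hmA m), hv',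
      Trivialization.linearMapAt_symmₗ _ (hmB m)]
  have hφ_of_L : ∀ m : M, Surjective (ℓ m) → Surjective (φ m) := by
    intro m h y
    have hinj : Injective ((trivializationAt FB B (f m)).linearMapAt ℝ (f m)) := by
      intro p q hpq
      have h1 := (trivializationAt FB B (f m)).symmₗ_linearMapAt (R := ℝ) (hmB m) p
      have h2 := (trivializationAt FB B (f m)).symmₗ_linearMapAt (R := ℝ) (hmB m) q
      rw [← h1, ← h2, hpq]
    obtain ⟨u, hu⟩ := h ((trivializationAt FB B (f m)).linearMapAt ℝ (f m) y)
    refine ⟨(trivializationAt FA A m).symmₗ ℝ m u, hinj ?_⟩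
    simpa only [hℓ, LinearMap.comp_apply] using hu
  -- The key differential-geometric computation, in the preferred charts.
  have key : ∀ (m : M) (v : A m),
      (∀ w : EM × FA,
        ((mfderiv (IM.prod 𝓘(ℝ, FA)) (JN.prod 𝓘(ℝ, FB)) Φ ⟨m, v⟩ :
            (EM × FA) →L[ℝ] EN × FB) w).1
          = (mfderiv IM JN f m : EM →L[ℝ] EN) w.1) ∧
      (∀ du : FA,
        ((mfderiv (IM.prod 𝓘(ℝ, FA)) (JN.prod 𝓘(ℝ, FB)) Φ ⟨m, v⟩ :
            (EM × FA) →L[ℝ] EN × FB) ((0 : EM), du))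
          = (0, ℓ m du)) ∧
      (v = 0 → ∀ dx : EM,
        ((mfderiv (IM.prod 𝓘(ℝ, FA)) (JN.prod 𝓘(ℝ, FB)) Φ ⟨m, v⟩ :
            (EM × FA) →L[ℝ] EN × FB) (dx, (0 : FA))).2 = 0) := by
    intro m v
    set eA := trivializationAt FA A m with heA
    set eB := trivializationAt FB B (f m) with heB
    set a : TotalSpace FA A := ⟨m, v⟩ with ha
    set x₀ : EM := extChartAt IM m m with hx₀
    set ψ : EM → M := ⇑(extChartAt IM m).symm with hψ
    have hψx₀ : ψ x₀ = m := extChartAt_to_inv m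
    set Fr : EM × FA → EN × FB :=
      writtenInExtChartAt (IM.prod 𝓘(ℝ, FA)) (JN.prod 𝓘(ℝ, FB)) a Φ with hFr
    set Gr : EM → EN := writtenInExtChartAt IM JN m f with hGr
    set T : (EM × FA) →L[ℝ] EN × FB :=
      (mfderiv (IM.prod 𝓘(ℝ, FA)) (JN.prod 𝓘(ℝ, FB)) Φ a : (EM × FA) →L[ℝ] EN × FB) with hT
    set D : EM →L[ℝ] EN := (mfderiv IM JN f m : EM →L[ℝ] EN) with hD
    -- the chart on the total space of `A`
    have hextA : extChartAt (IM.prod 𝓘(ℝ, FA)) a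
        = eA.toPartialEquiv ≫ (extChartAt IM m).prod (PartialEquiv.refl FA) :=
      FiberBundle.extChartAt a
    have hextB : extChartAt (JN.prod 𝓘(ℝ, FB)) (Φ a)
        = eB.toPartialEquiv ≫ (extChartAt JN (f m)).prod (PartialEquiv.refl FB) := by
      have hΦa : Φ a = ⟨f m, φ m v⟩ := hΦdef a
      rw [hΦa]
      exact FiberBundle.extChartAt _
    -- the representative of `Φ` in the charts
    have hf_rep : ∀ z : EM × FA, ψ z.1 ∈ eA.baseSet → f (ψ z.1) ∈ eB.baseSet →
        Fr z = (extChartAt JN (f m) (f (ψ z.1)),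
          eB.linearMapAt ℝ (f (ψ z.1)) (φ (ψ z.1) (eA.symmₗ ℝ (ψ z.1) z.2))) := by
      intro z hz1 hz2
      have hsymm : (extChartAt (IM.prod 𝓘(ℝ, FA)) a).symm z
          = ⟨ψ z.1, eA.symm (ψ z.1) z.2⟩ := by
        rw [hextA, PartialEquiv.coe_trans_symm, Function.comp_apply,
          PartialEquiv.prod_symm, PartialEquiv.refl_symm]
        have h1 : ((extChartAt IM m).symm.prod (PartialEquiv.refl FA)) z
            = (ψ z.1, z.2) := rfl
        rw [h1]
        exact (eA.mk_symm hz1 z.2).symm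
      have hgoal : Fr z = extChartAt (JN.prod 𝓘(ℝ, FB)) (Φ a)
          (Φ ((extChartAt (IM.prod 𝓘(ℝ, FA)) a).symm z)) := rfl
      rw [hgoal, hextB, hsymm, hΦdef]
      rw [PartialEquiv.coe_trans, Function.comp_apply]
      show (((extChartAt JN (f m)).prod (PartialEquiv.refl FB))
          (eB ⟨f (ψ z.1), φ (ψ z.1) (eA.symm (ψ z.1) z.2)⟩)) = _
      have h3 : eB ⟨f (ψ z.1), φ (ψ z.1) (eA.symm (ψ z.1) z.2)⟩
          = (f (ψ z.1), (eB ⟨f (ψ z.1), φ (ψ z.1) (eA.symm (ψ z.1) z.2)⟩).2) :=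
        Prod.ext (eB.coe_fst' hz2) rfl
      rw [h3]
      have h4 : (eB ⟨f (ψ z.1), φ (ψ z.1) (eA.symm (ψ z.1) z.2)⟩).2
          = eB.linearMapAt ℝ (f (ψ z.1)) (φ (ψ z.1) (eA.symmₗ ℝ (ψ z.1) z.2)) := by
        rw [eB.coe_linearMapAt_of_mem hz2, Trivialization.coe_symmₗ]
        exact hz1
      rw [h4]
      rfl
    -- nbhd of the base chart point on which the representation is valid
    have hS₁ : ψ ⁻¹' (eA.baseSet ∩ f ⁻¹' eB.baseSet) ∈ nhds x₀ := by
      refine ContinuousAt.preimage_mem_nhds (continuousAt_extChartAt_symm m) ?_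
      refine IsOpen.mem_nhds (eA.open_baseSet.inter (eB.open_baseSet.preimage hf.continuous)) ?_
      rw [hψx₀]
      exact ⟨hmA m, hmB m⟩
    -- derivative facts
    have hp₀ : extChartAt (IM.prod 𝓘(ℝ, FA)) a a = (x₀, (eA a).2) := by
      rw [hextA, PartialEquiv.coe_trans, Function.comp_apply]
      have h1 : (eA.toPartialEquiv) a = ((eA a).1, (eA a).2) := rfl
      rw [h1, eA.coe_fst' (hmA m)]
      rfl
    have hTT : HasFDerivAt Fr T (x₀, (eA a).2) := by
      have h := ((hΦ a).mdifferentiableAt (by simp)).hasMFDerivAt.2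
      rw [ModelWithCorners.Boundaryless.range_eq_univ] at h
      have h' : HasFDerivWithinAt Fr T Set.univ (x₀, (eA a).2) := by rw [← hp₀]; exact h
      exact hasFDerivWithinAt_univ.mp h'
    have hG : HasFDerivAt Gr D x₀ := by
      have h := ((hf m).mdifferentiableAt (by simp)).hasMFDerivAt.2
      rw [ModelWithCorners.Boundaryless.range_eq_univ] at h
      have h' : HasFDerivWithinAt Gr D Set.univ x₀ := h
      exact hasFDerivWithinAt_univ.mp h'
    -- Claim 1: the first component of T is D ∘ fst
    have hfst_clm : (ContinuousLinearMap.fst ℝ EN FB).comp T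
        = D.comp (ContinuousLinearMap.fst ℝ EM FA) := by
      have hS : (ψ ⁻¹' (eA.baseSet ∩ f ⁻¹' eB.baseSet)) ×ˢ (Set.univ : Set FA)
          ∈ nhds ((x₀, (eA a).2) : EM × FA) := prod_mem_nhds hS₁ Filter.univ_mem
      have hFeq : (fun z : EM × FA => (Fr z).1) =ᶠ[nhds ((x₀, (eA a).2) : EM × FA)]
          (fun z : EM × FA => Gr z.1) := by
        filter_upwards [hS] with z hz
        rw [hf_rep z hz.1.1 hz.1.2]
        rfl
      have h1 : HasFDerivAt (fun z : EM × FA => (Fr z).1)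
          ((ContinuousLinearMap.fst ℝ EN FB).comp T) ((x₀, (eA a).2)) :=
        HasFDerivAt.comp _ ((ContinuousLinearMap.fst ℝ EN FB).hasFDerivAt) hTT
      have hG' : HasFDerivAt Gr D (Prod.fst ((x₀, (eA a).2) : EM × FA)) := hG
      have h2 : HasFDerivAt (fun z : EM × FA => Gr z.1)
          (D.comp (ContinuousLinearMap.fst ℝ EM FA)) ((x₀, (eA a).2)) :=
        HasFDerivAt.comp _ hG' hasFDerivAt_fst
      exact ((h2.congr_of_eventuallyEq hFeq).unique h1).symm
    -- Claim 2: T on vertical vectors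
    have hinr_clm : T.comp ((0 : FA →L[ℝ] EM).prod (ContinuousLinearMap.id ℝ FA))
        = (0 : FA →L[ℝ] EN).prod (LinearMap.toContinuousLinearMap (ℓ m)) := by
      have hfun : (fun u : FA => Fr (x₀, u))
          = fun u : FA => ((Gr x₀, LinearMap.toContinuousLinearMap (ℓ m) u) : EN × FB) := by
        funext u
        have hb1 : ψ ((x₀, u) : EM × FA).1 ∈ eA.baseSet := by rw [hψx₀]; exact hmA m
        have hb2 : f (ψ ((x₀, u) : EM × FA).1) ∈ eB.baseSet := by rw [hψx₀]; exact hmB m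
        rw [hf_rep (x₀, u) hb1 hb2]
        refine Prod.ext rfl ?_
        show eB.linearMapAt ℝ (f (ψ ((x₀, u) : EM × FA).1))
            (φ (ψ ((x₀, u) : EM × FA).1) (eA.symmₗ ℝ (ψ ((x₀, u) : EM × FA).1) u)) = _
        have hml : ψ ((x₀, u) : EM × FA).1 = m := hψx₀
        rw [hml]
        simp [hℓ, heA, heB]
      have hι : HasFDerivAt (fun u : FA => ((x₀, u) : EM × FA))
          ((0 : FA →L[ℝ] EM).prod (ContinuousLinearMap.id ℝ FA)) ((eA a).2) :=
        (hasFDerivAt_const x₀ _).prodMk (hasFDerivAt_id _)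
      have h1 : HasFDerivAt (fun u : FA => Fr (x₀, u))
          (T.comp ((0 : FA →L[ℝ] EM).prod (ContinuousLinearMap.id ℝ FA))) ((eA a).2) :=
        HasFDerivAt.comp ((eA a).2) hTT hι
      rw [hfun] at h1
      have h2 : HasFDerivAt
          (fun u : FA => ((Gr x₀, LinearMap.toContinuousLinearMap (ℓ m) u) : EN × FB))
          ((0 : FA →L[ℝ] EN).prod (LinearMap.toContinuousLinearMap (ℓ m))) ((eA a).2) :=
        (hasFDerivAt_const _ _).prodMk ((LinearMap.toContinuousLinearMap (ℓ m)).hasFDerivAt)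
      exact h1.unique h2
    refine ⟨?_, ?_, ?_⟩
    · intro w
      have h := DFunLike.congr_fun hfst_clm w
      have h' : (T w).1 = D w.1 := by simpa using h
      exact h'
    · intro du
      have h := DFunLike.congr_fun hinr_clm du
      have h' : T ((0 : EM), du) = (((0 : EN), ℓ m du) : EN × FB) := by
        simpa using h
      exact h'
    · intro hv dx
      have hsnd0 : (eA a).2 = 0 := by
        have h1 : (eA a).2 = eA.linearMapAt ℝ m v := by
          rw [eA.coe_linearMapAt_of_mem (hmA m)]
        rw [h1, hv, map_zero]
      have hι : HasFDerivAt (fun x : EM => ((x, (0 : FA)) : EM × FA))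
          ((ContinuousLinearMap.id ℝ EM).prod (0 : EM →L[ℝ] FA)) x₀ :=
        (hasFDerivAt_id _).prodMk (hasFDerivAt_const _ _)
      have h1 : HasFDerivAt (fun x : EM => Fr (x, (0 : FA)))
          (T.comp ((ContinuousLinearMap.id ℝ EM).prod (0 : EM →L[ℝ] FA))) x₀ := by
        rw [hsnd0] at hTT
        exact HasFDerivAt.comp x₀ hTT hι
      have h2 : (fun x : EM => (Fr (x, (0 : FA))).2) =ᶠ[nhds x₀] fun _ => (0 : FB) := by
        filter_upwards [hS₁] with x hx
        rw [hf_rep (x, (0 : FA)) hx.1 hx.2]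
        simp
      have h3 : HasFDerivAt (fun x : EM => (Fr (x, (0 : FA))).2)
          ((ContinuousLinearMap.snd ℝ EN FB).comp
            (T.comp ((ContinuousLinearMap.id ℝ EM).prod (0 : EM →L[ℝ] FA)))) x₀ :=
        HasFDerivAt.comp _ ((ContinuousLinearMap.snd ℝ EN FB).hasFDerivAt) h1
      have h4 : HasFDerivAt (fun _ : EM => (0 : FB))
          ((ContinuousLinearMap.snd ℝ EN FB).comp
            (T.comp ((ContinuousLinearMap.id ℝ EM).prod (0 : EM →L[ℝ] FA)))) x₀ :=
        h3.congr_of_eventuallyEq h2.symm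
      have h5 := h4.unique (hasFDerivAt_const (0 : FB) x₀)
      have h6 := DFunLike.congr_fun h5 dx
      have h' : (T (dx, (0 : FA))).2 = 0 := by simpa using h6
      exact h'
  -- Now the main equivalence.
  constructor
  · rintro ⟨hΦs, hΦd⟩
    refine ⟨⟨?_, ?_⟩, ?_⟩
    · intro n'
      obtain ⟨aa, haa⟩ := hΦs ⟨n', 0⟩
      exact ⟨aa.proj, congrArg TotalSpace.proj ((hΦdef aa).symm.trans haa)⟩
    · intro m
      obtain ⟨h1, h2, h3⟩ := key m 0
      set T : (EM × FA) →L[ℝ] EN × FB :=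
        (mfderiv (IM.prod 𝓘(ℝ, FA)) (JN.prod 𝓘(ℝ, FB)) Φ ⟨m, (0 : A m)⟩ :
          (EM × FA) →L[ℝ] EN × FB) with hTdef
      have hsurjT : Surjective T := hΦd ⟨m, (0 : A m)⟩
      have h1' : ∀ w : EM × FA, (T w).1 = (mfderiv IM JN f m : EM →L[ℝ] EN) w.1 := h1
      intro y
      obtain ⟨w, hw⟩ := hsurjT ((y, 0) : EN × FB)
      refine ⟨w.1, ?_⟩
      have h := h1' w
      rw [hw] at h
      exact h.symm
    · intro m
      obtain ⟨h1, h2, h3⟩ := key m 0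
      apply hφ_of_L m
      set T : (EM × FA) →L[ℝ] EN × FB :=
        (mfderiv (IM.prod 𝓘(ℝ, FA)) (JN.prod 𝓘(ℝ, FB)) Φ ⟨m, (0 : A m)⟩ :
          (EM × FA) →L[ℝ] EN × FB) with hTdef
      have hsurjT : Surjective T := hΦd ⟨m, (0 : A m)⟩
      have h2' : ∀ du : FA, T ((0 : EM), du) = (((0 : EN), ℓ m du) : EN × FB) := h2
      have h3' : ∀ dx : EM, (T (dx, (0 : FA))).2 = 0 := h3 rfl
      intro w
      obtain ⟨p, hp⟩ := hsurjT (((0 : EN), w) : EN × FB)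
      refine ⟨p.2, ?_⟩
      have hppair : ((p.1, (0 : FA)) : EM × FA) + (((0 : EM), p.2) : EM × FA) = p := by
        ext <;> simp
      have hadd : T p = T (p.1, (0 : FA)) + T ((0 : EM), p.2) := by
        rw [← map_add, hppair]
      rw [hadd] at hp
      have hsnd := congrArg Prod.snd hp
      rw [Prod.snd_add, h3' p.1, h2' p.2] at hsnd
      simpa using hsnd
  · rintro ⟨⟨hfs, hfd⟩, hφs⟩
    constructor
    · rintro ⟨n', w⟩
      obtain ⟨m, rfl⟩ := hfs n'
      obtain ⟨v', rfl⟩ := hφs m w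
      exact ⟨⟨m, v'⟩, (hΦdef ⟨m, v'⟩).symm ▸ rfl⟩
    · rintro ⟨m, v⟩
      obtain ⟨h1, h2, _⟩ := key m v
      set T : (EM × FA) →L[ℝ] EN × FB :=
        (mfderiv (IM.prod 𝓘(ℝ, FA)) (JN.prod 𝓘(ℝ, FB)) Φ ⟨m, v⟩ :
          (EM × FA) →L[ℝ] EN × FB) with hTdef
      have h1' : ∀ w : EM × FA, (T w).1 = (mfderiv IM JN f m : EM →L[ℝ] EN) w.1 := h1
      have h2' : ∀ du : FA, T ((0 : EM), du) = (((0 : EN), ℓ m du) : EN × FB) := h2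
      have hsurjT : Surjective T := by
        intro c
        obtain ⟨dx, hdx⟩ := hfd m c.1
        have hdx' : (mfderiv IM JN f m : EM →L[ℝ] EN) dx = c.1 := hdx
        obtain ⟨du, hdu⟩ := hL_of_φ m (hφs m) (c.2 - (T (dx, (0 : FA))).2)
        refine ⟨(dx, du), ?_⟩
        have hppair : ((dx, (0 : FA)) : EM × FA) + (((0 : EM), du) : EM × FA)
            = ((dx, du) : EM × FA) := by ext <;> simp <;> exact add_zero (dx : EM)
        have hadd : T (dx, du) = T (dx, (0 : FA)) + T ((0 : EM), du) := by
          rw [← map_add, hppair]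
        rw [hadd, h2' du]
        refine Prod.ext ?_ ?_
        · rw [Prod.fst_add, h1' (dx, (0 : FA))]
          exact (add_zero _).trans hdx'
        · rw [Prod.snd_add, hdu]
          simp
      exact hsurjT
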